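/- For rational r ≠ 0, the map (x,y) ↦ (s,t) = ((x-r⁴)/y, r²(x-1)/y) sends any rational point (x,y) with y ≠ 0 on the Weierstrass curve y² = x(x-1)(x-r⁴) to a rational point on the twisted Huff curve t(s²+1) = r²·s(t²+1). -/

import Mathlib

theorem stmt_5 (r : ℚ) (hr : r ≠ 0) (x y : ℚ) (hy : y ≠ 0)
    (h : y^2 = x*(x-1)*(x-r^4)) :
    (r^2*(x-1)/y) * (((x-r^4)/y)^2 + 1) =
      r^2 * ((x-r^4)/y) * ((r^2*(x-1)/y)^2 + 1) := by
  field_simp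
  linear_combination (r^4-1) * h
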